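/- arXiv:1810.06291 — 2 statements merged into one kernel-verified Lean document; each statement's English description precedes it below -/
import Mathlib

section
/- If P is a strongly/strictly stochastically transitive bucket distribution on S_n and K* = max{K : there exists a bucket order C of size K with P ∈ 𝐏_C}, then there is a unique shape λ* of size K* such that Λ_P(C*^{(K*,λ*)}) = 0, i.e., a unique bucket order of maximal size whose bucket distribution class contains P. -/
open Finset
open scoped Classical

/-- Pairwise marginal `p_{i,j} = P(σ(i) < σ(j))`. -/
def pairwiseMarginal {n : ℕ} (P : Equiv.Perm (Fin n) → ℝ) (i j : Fin n) : ℝ :=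
  ∑ σ : Equiv.Perm (Fin n), if σ i < σ j then P σ else 0

/-- `P` belongs to `𝐏_C` for the bucket order encoded by `b`: every
inter-bucket pair is deterministically ordered, i.e. `p_{j,i} = 0` whenever
`i ≺_C j`.  (Equivalently, `Λ_P(C) = 0`.) -/
def MemBucketClass {n K : ℕ} (P : Equiv.Perm (Fin n) → ℝ)
    (b : Fin n → Fin K) : Prop :=
  ∀ i j, b i < b j → pairwiseMarginal P j i = 0

/-- Complementarity of pairwise marginals for distinct items. -/
lemma pairwiseMarginal_add {n : ℕ} (P : Equiv.Perm (Fin n) → ℝ)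
    (hP1 : ∑ σ : Equiv.Perm (Fin n), P σ = 1) {i j : Fin n} (hij : i ≠ j) :
    pairwiseMarginal P i j + pairwiseMarginal P j i = 1 := by
  unfold pairwiseMarginal
  rw [← Finset.sum_add_distrib, ← hP1]
  refine Finset.sum_congr rfl fun σ _ => ?_
  have hne : σ i ≠ σ j := fun h => hij (σ.injective h)
  rcases lt_or_gt_of_ne hne with h | h
  · rw [if_pos h, if_neg (not_lt.2 h.le), add_zero]
  · rw [if_neg (not_lt.2 h.le), if_pos h, zero_add]

/-- If `P` is a strongly/strictly stochastically transitive bucket distribution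
and `K*` is the maximal number of buckets of a bucket order `C` with
`P ∈ 𝐏_C`, then there is a unique shape `λ*` of size `K*` carried by a bucket
order of size `K*` whose bucket-distribution class contains `P` (i.e. with
zero distortion). -/
theorem unique_maximal_shape {n : ℕ} (P : Equiv.Perm (Fin n) → ℝ)
    (hP0 : ∀ σ, 0 ≤ P σ) (hP1 : ∑ σ : Equiv.Perm (Fin n), P σ = 1)
    (hSST : ∀ i j k : Fin n, i ≠ j → k ≠ i → k ≠ j →
      1 / 2 ≤ pairwiseMarginal P i j →
      pairwiseMarginal P j k ≤ pairwiseMarginal P i k)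
    (hstrict : ∀ i j : Fin n, i ≠ j → pairwiseMarginal P i j ≠ 1 / 2)
    (Kstar : ℕ) (hK2 : 2 ≤ Kstar)
    (hmax : IsGreatest {K : ℕ | ∃ b : Fin n → Fin K,
      Function.Surjective b ∧ MemBucketClass P b} Kstar) :
    ∃! lam : Fin Kstar → ℕ, ∃ b : Fin n → Fin Kstar,
      Function.Surjective b ∧
      (∀ k, (Finset.univ.filter (fun i => b i = k)).card = lam k) ∧
      MemBucketClass P b := by
  obtain ⟨b, hbsurj, hbmem⟩ := hmax.1
  -- key claim: any two admissible surjective bucket maps coincide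
  have key : ∀ b' : Fin n → Fin Kstar, Function.Surjective b' → MemBucketClass P b' →
      b' = b := by
    intro b' hb'surj hb'mem
    -- combine b and b' lexicographically
    set c : Fin n → Fin Kstar ×ₗ Fin Kstar := fun i => toLex (b i, b' i) with hc
    set s : Finset (Fin Kstar ×ₗ Fin Kstar) := Finset.univ.image c with hs
    have hmem : ∀ i, c i ∈ s := fun i => Finset.mem_image_of_mem c (Finset.mem_univ i)
    have hclt : ∀ i j : Fin n, c i < c j → pairwiseMarginal P j i = 0 := by
      intro i j h
      rcases Prod.Lex.lt_iff.1 h with h1 | ⟨h1, h2⟩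
      · exact hbmem i j h1
      · exact hb'mem i j h2
    -- a bucket map with s.card buckets
    set e := s.orderIsoOfFin (rfl : s.card = s.card)
    have hscard : s.card ∈ {K : ℕ | ∃ b : Fin n → Fin K,
        Function.Surjective b ∧ MemBucketClass P b} := by
      refine ⟨fun i => e.symm ⟨c i, hmem i⟩, ?_, ?_⟩
      · intro t
        obtain ⟨i, -, hi⟩ := Finset.mem_image.1 (e t).2
        refine ⟨i, ?_⟩
        show e.symm ⟨c i, hmem i⟩ = t
        have : (⟨c i, hmem i⟩ : {x // x ∈ s}) = e t := Subtype.ext hi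
        rw [this, OrderIso.symm_apply_apply]
      · intro i j h
        have : (⟨c i, hmem i⟩ : {x // x ∈ s}) < ⟨c j, hmem j⟩ := by
          have := e.strictMono h
          simpa using this
        exact hclt i j this
    have hle : s.card ≤ Kstar := hmax.2 hscard
    -- s.card ≥ Kstar since b = fst ∘ c is surjective
    have himb : Finset.univ.image b = (Finset.univ : Finset (Fin Kstar)) := by
      refine Finset.eq_univ_of_forall fun k => ?_
      obtain ⟨i, hi⟩ := hbsurj k
      exact Finset.mem_image.2 ⟨i, Finset.mem_univ i, hi⟩
    have himb' : Finset.univ.image b' = (Finset.univ : Finset (Fin Kstar)) := by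
      refine Finset.eq_univ_of_forall fun k => ?_
      obtain ⟨i, hi⟩ := hb'surj k
      exact Finset.mem_image.2 ⟨i, Finset.mem_univ i, hi⟩
    have hge : Kstar ≤ s.card := by
      have : Finset.univ.image b = s.image (fun x => (ofLex x).1) := by
        rw [hs, Finset.image_image]; rfl
      calc Kstar = (Finset.univ.image b).card := by rw [himb, Finset.card_univ, Fintype.card_fin]
        _ = (s.image (fun x => (ofLex x).1)).card := by rw [this]
        _ ≤ s.card := Finset.card_image_le
    have hcard : s.card = Kstar := le_antisymm hle hge
    -- the second projection is injective on s, hence b' i determined by b i and conversely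
    have hsnd : ∀ i j : Fin n, b' i = b' j → b i = b j := by
      intro i j hij
      have hsurj2 : Function.Surjective (fun x : {x // x ∈ s} => (ofLex x.1).2) := by
        intro k
        obtain ⟨i, hi⟩ := hb'surj k
        exact ⟨⟨c i, hmem i⟩, hi⟩
      have hcards : Fintype.card {x // x ∈ s} = Fintype.card (Fin Kstar) := by
        rw [Fintype.card_coe, hcard, Fintype.card_fin]
      have hinj : Function.Injective (fun x : {x // x ∈ s} => (ofLex x.1).2) :=
        ((Fintype.bijective_iff_surjective_and_card _).2 ⟨hsurj2, hcards⟩).1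
      have : (⟨c i, hmem i⟩ : {x // x ∈ s}) = ⟨c j, hmem j⟩ := hinj hij
      have hcc : c i = c j := congrArg Subtype.val this
      exact congrArg (fun x => (ofLex x).1) hcc
    have hfst : ∀ i j : Fin n, b i = b j → b' i = b' j := by
      intro i j hij
      have hsurj1 : Function.Surjective (fun x : {x // x ∈ s} => (ofLex x.1).1) := by
        intro k
        obtain ⟨i, hi⟩ := hbsurj k
        exact ⟨⟨c i, hmem i⟩, hi⟩
      have hcards : Fintype.card {x // x ∈ s} = Fintype.card (Fin Kstar) := by
        rw [Fintype.card_coe, hcard, Fintype.card_fin]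
      have hinj : Function.Injective (fun x : {x // x ∈ s} => (ofLex x.1).1) :=
        ((Fintype.bijective_iff_surjective_and_card _).2 ⟨hsurj1, hcards⟩).1
      have : (⟨c i, hmem i⟩ : {x // x ∈ s}) = ⟨c j, hmem j⟩ := hinj hij
      have hcc : c i = c j := congrArg Subtype.val this
      exact congrArg (fun x => (ofLex x).2) hcc
    -- relabeling maps
    have step : ∀ i j : Fin n, b i < b j → b' i < b' j := by
      intro i j h
      have hne : i ≠ j := fun hij => absurd (congrArg b hij) (ne_of_lt h)
      have h0 : pairwiseMarginal P j i = 0 := hbmem i j h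
      have h1 : pairwiseMarginal P i j = 1 := by
        have := pairwiseMarginal_add P hP1 hne
        linarith
      have hne' : b' i ≠ b' j := fun hb => absurd (hsnd i j hb) (ne_of_lt h)
      rcases lt_or_gt_of_ne hne' with h' | h'
      · exact h'
      · exact absurd (hb'mem j i h') (by rw [h1]; norm_num)
    have step' : ∀ i j : Fin n, b' i < b' j → b i < b j := by
      intro i j h
      have hne : i ≠ j := fun hij => absurd (congrArg b' hij) (ne_of_lt h)
      have h0 : pairwiseMarginal P j i = 0 := hb'mem i j h
      have h1 : pairwiseMarginal P i j = 1 := by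
        have := pairwiseMarginal_add P hP1 hne
        linarith
      have hne' : b i ≠ b j := fun hb => absurd (hfst i j hb) (ne_of_lt h)
      rcases lt_or_gt_of_ne hne' with h' | h'
      · exact h'
      · exact absurd (hbmem j i h') (by rw [h1]; norm_num)
    set f : Fin Kstar → Fin Kstar := fun k => b' (hbsurj k).choose with hf
    have hfb : ∀ i, f (b i) = b' i := by
      intro i
      exact hfst _ i (hbsurj (b i)).choose_spec
    set g : Fin Kstar → Fin Kstar := fun k => b (hb'surj k).choose with hg
    have hgb : ∀ i, g (b' i) = b i := by
      intro i
      exact hsnd _ i (hb'surj (b' i)).choose_spec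
    have hfmono : StrictMono f := by
      intro k l hkl
      obtain ⟨i, hi⟩ := hbsurj k
      obtain ⟨j, hj⟩ := hbsurj l
      rw [← hi, ← hj, hfb, hfb]
      exact step i j (by rw [hi, hj]; exact hkl)
    have hgmono : StrictMono g := by
      intro k l hkl
      obtain ⟨i, hi⟩ := hb'surj k
      obtain ⟨j, hj⟩ := hb'surj l
      rw [← hi, ← hj, hgb, hgb]
      exact step' i j (by rw [hi, hj]; exact hkl)
    have hid : ∀ k, f k = k := by
      intro k
      haveI hwf : WellFoundedLT (Fin Kstar) := inferInstance
      have h1 : k ≤ f k := @StrictMono.le_apply (Fin Kstar) _ hwf f hfmono k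
      have h2 : f k ≤ g (f k) := @StrictMono.le_apply (Fin Kstar) _ hwf g hgmono (f k)
      have h3 : g (f k) = k := by
        obtain ⟨i, hi⟩ := hbsurj k
        rw [← hi, hfb, hgb]
      rw [h3] at h2
      exact le_antisymm h2 h1
    funext i
    rw [← hfb i, hid]
  refine ⟨fun k => (Finset.univ.filter (fun i => b i = k)).card,
    ⟨b, hbsurj, fun k => rfl, hbmem⟩, ?_⟩
  rintro lam' ⟨b', hb'surj, hlam', hb'mem⟩
  funext k
  rw [← hlam' k, key b' hb'surj hb'mem]
end

section
/- Under the low-noise condition min_{i<j} |p_{i,j} − 1/2| ≥ h > 0 and strict/strong stochastic transitivity of P, the random variable D(C) = Σ_{i≠j} 𝟙{Σ(j)<Σ(i)}·(𝟙{i ≺_C j} − 𝟙{i ≺_{C*} j}), where C* = C*^{(K,λ)} is the optimal bucket order of shape λ, satisfies Var(D(C)) ≤ 2^{n(n−1)/2} (n²/h) · E[D(C)] for every bucket order C of shape λ. -/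
open Finset
open scoped Classical

/-- Copeland/Kemeny rank: `σ*_P(i) = 1 + #{j ≠ i : p_{i,j} < 1/2}`. -/
noncomputable def copelandRank {n : ℕ} (P : Equiv.Perm (Fin n) → ℝ)
    (i : Fin n) : ℕ :=
  1 + (Finset.univ.filter (fun j => j ≠ i ∧ pairwiseMarginal P i j < 1 / 2)).card


/-- The bucket order encoded by `b` has shape `lam`. -/
def HasShape {n K : ℕ} (b : Fin n → Fin K) (lam : Fin K → ℕ) : Prop :=
  ∀ k, (Finset.univ.filter (fun i => b i = k)).card = lam k

/-- `D(C) = Σ_{i≠j} 𝟙{Σ(j)<Σ(i)} (𝟙{i ≺_C j} - 𝟙{i ≺_{C*} j})`, as a function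
of the realization `σ` of `Σ`. -/
def Dvar {n K : ℕ} (b bstar : Fin n → Fin K) (σ : Equiv.Perm (Fin n)) : ℝ :=
  ∑ p ∈ Finset.univ.filter
      (fun p : Fin n × Fin n => p.1 ≠ p.2 ∧ σ p.2 < σ p.1),
    ((if b p.1 < b p.2 then (1 : ℝ) else 0) -
      (if bstar p.1 < bstar p.2 then (1 : ℝ) else 0))


section PM
variable {n : ℕ} (P : Equiv.Perm (Fin n) → ℝ)

lemma pm_nonneg (hP0 : ∀ σ, 0 ≤ P σ) (i j : Fin n) : 0 ≤ pairwiseMarginal P i j :=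
  Finset.sum_nonneg fun σ _ => by split <;> [exact hP0 σ; exact le_rfl]

lemma pm_add (hP1 : ∑ σ : Equiv.Perm (Fin n), P σ = 1) {i j : Fin n} (hij : i ≠ j) :
    pairwiseMarginal P i j + pairwiseMarginal P j i = 1 := by
  rw [pairwiseMarginal, pairwiseMarginal, ← Finset.sum_add_distrib, ← hP1]
  refine Finset.sum_congr rfl fun σ _ => ?_
  have hne : σ i ≠ σ j := fun hc => hij (σ.injective hc)
  rcases lt_or_gt_of_ne hne with hlt | hgt
  · rw [if_pos hlt, if_neg (asymm hlt), add_zero]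
  · rw [if_neg (asymm hgt), if_pos hgt, zero_add]

/-- strict loss `p_{ij} < 1/2` pushes the Copeland rank: `rank j < rank i`. -/
lemma rank_lt_of_pm_lt (hP1 : ∑ σ : Equiv.Perm (Fin n), P σ = 1)
    (hSST : ∀ i j k : Fin n, i ≠ j → k ≠ i → k ≠ j →
      1 / 2 ≤ pairwiseMarginal P i j →
      pairwiseMarginal P j k ≤ pairwiseMarginal P i k)
    {i j : Fin n} (hij : i ≠ j) (hlt : pairwiseMarginal P i j < 1 / 2) :
    copelandRank P j < copelandRank P i := by
  have hji : (1:ℝ)/2 ≤ pairwiseMarginal P j i := by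
    have := pm_add P hP1 hij; linarith
  rw [copelandRank, copelandRank]
  have hss : (Finset.univ.filter (fun y => y ≠ j ∧ pairwiseMarginal P j y < 1 / 2)) ⊂
      (Finset.univ.filter (fun y => y ≠ i ∧ pairwiseMarginal P i y < 1 / 2)) := by
    constructor
    · intro y hy
      simp only [Finset.mem_filter, Finset.mem_univ, true_and] at hy ⊢
      have hyi : y ≠ i := by
        rintro rfl
        exact absurd hy.2 (not_lt.mpr hji)
      refine ⟨hyi, lt_of_le_of_lt (hSST j i y (Ne.symm hij) hy.1 hyi hji) hy.2⟩
    · intro hsub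
      have hjmem : j ∈ Finset.univ.filter (fun y => y ≠ i ∧ pairwiseMarginal P i y < 1 / 2) := by
        simp only [Finset.mem_filter, Finset.mem_univ, true_and]
        exact ⟨Ne.symm hij, hlt⟩
      have := hsub hjmem
      simp only [Finset.mem_filter, Finset.mem_univ, true_and] at this
      exact this.1 rfl
  have := Finset.card_lt_card hss
  omega

end PM

section Rank
variable {n : ℕ} (P : Equiv.Perm (Fin n) → ℝ)
variable (hP1 : ∑ σ : Equiv.Perm (Fin n), P σ = 1)
variable (hSST : ∀ i j k : Fin n, i ≠ j → k ≠ i → k ≠ j →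
      1 / 2 ≤ pairwiseMarginal P i j →
      pairwiseMarginal P j k ≤ pairwiseMarginal P i k)
variable (hstrict : ∀ i j : Fin n, i ≠ j → pairwiseMarginal P i j ≠ 1 / 2)

include hP1 hSST hstrict

lemma half_lt_pm_of_rank_lt {i j : Fin n} (hij : i ≠ j)
    (hr : copelandRank P i < copelandRank P j) : 1 / 2 < pairwiseMarginal P i j := by
  rcases lt_trichotomy (pairwiseMarginal P i j) (1/2) with hlt | heq | hgt
  · exact absurd (rank_lt_of_pm_lt P hP1 hSST hij hlt) (by omega)
  · exact absurd heq (hstrict i j hij)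
  · exact hgt

lemma rank_injective : Function.Injective (copelandRank P) := by
  intro i j hij
  by_contra hne
  rcases lt_trichotomy (pairwiseMarginal P i j) (1/2) with hlt | heq | hgt
  · exact absurd hij.symm (Nat.ne_of_lt (rank_lt_of_pm_lt P hP1 hSST hne hlt))
  · exact absurd heq (hstrict i j hne)
  · have : pairwiseMarginal P j i < 1/2 := by
      have := pm_add P hP1 hne; linarith
    exact absurd hij (Nat.ne_of_lt (rank_lt_of_pm_lt P hP1 hSST (Ne.symm hne) this))

omit hSST hstrict in
lemma pm_abs_ge {h : ℝ}
    (hnoise : ∀ i j : Fin n, i < j → h ≤ |pairwiseMarginal P i j - 1 / 2|)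
    {i j : Fin n} (hij : i ≠ j) : h ≤ |pairwiseMarginal P i j - 1 / 2| := by
  rcases lt_or_gt_of_ne hij with hlt | hgt
  · exact hnoise i j hlt
  · have := hnoise j i hgt
    have hadd := pm_add P hP1 hij
    have : |pairwiseMarginal P j i - 1/2| = |pairwiseMarginal P i j - 1/2| := by
      rw [abs_sub_comm]; congr 1; linarith
    linarith [hnoise j i hgt, le_of_eq this.symm, abs_nonneg (pairwiseMarginal P i j - 1/2)]

lemma pm_ge_of_rank_lt {h : ℝ}
    (hnoise : ∀ i j : Fin n, i < j → h ≤ |pairwiseMarginal P i j - 1 / 2|)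
    {i j : Fin n} (hij : i ≠ j) (hr : copelandRank P i < copelandRank P j) :
    1 / 2 + h ≤ pairwiseMarginal P i j := by
  have h1 := half_lt_pm_of_rank_lt P hP1 hSST hstrict hij hr
  have h2 := pm_abs_ge P hP1 hnoise hij
  rw [abs_of_pos (by linarith)] at h2
  linarith
end Rank

section Generic
variable {n : ℕ} {M : Type*}

lemma sum_eq_pair' [AddCommMonoid M] {i j : Fin n} (hij : i ≠ j) (g : Fin n → M)
    (h0 : ∀ x, x ≠ i → x ≠ j → g x = 0) : ∑ x, g x = g i + g j := by
  rw [← Finset.sum_pair hij]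
  refine (Finset.sum_subset (Finset.subset_univ _) ?_).symm
  intro x _ hx
  simp only [Finset.mem_insert, Finset.mem_singleton, not_or] at hx
  exact h0 x hx.1 hx.2

lemma double_sum_ge [AddCommMonoid M] [PartialOrder M] [IsOrderedCancelAddMonoid M] (f : Fin n → Fin n → M)
    {i j : Fin n} (hij : i ≠ j) (c : M)
    (h0 : ∀ x y, x ≠ i → x ≠ j → y ≠ i → y ≠ j → f x y = 0)
    (hrow : ∀ y, y ≠ i → y ≠ j → 0 ≤ f i y + f j y)
    (hcol : ∀ x, x ≠ i → x ≠ j → 0 ≤ f x i + f x j)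
    (hcorn : c ≤ f i i + f i j + (f j i + f j j)) :
    c ≤ ∑ x : Fin n, ∑ y : Fin n, f x y := by
  have hmem : ∀ y : Fin n, y ∈ (univ \ ({i, j} : Finset (Fin n))) → y ≠ i ∧ y ≠ j := by
    intro y hy
    simp only [Finset.mem_sdiff, Finset.mem_insert, Finset.mem_singleton, not_or] at hy
    exact hy.2
  have hsplit : ∀ x : Fin n, ∑ y, f x y
      = (∑ y ∈ univ \ ({i, j} : Finset (Fin n)), f x y) + (f x i + f x j) := by
    intro x
    rw [← Finset.sum_pair hij, Finset.sum_sdiff (Finset.subset_univ _)]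
  calc c ≤ (∑ y ∈ univ \ ({i, j} : Finset (Fin n)), (f i y + f j y))
        + ∑ x ∈ ({i, j} : Finset (Fin n)), (f x i + f x j) := by
        refine le_add_of_nonneg_of_le (Finset.sum_nonneg ?_) ?_
        · intro y hy; exact hrow y (hmem y hy).1 (hmem y hy).2
        · rw [Finset.sum_pair hij]; exact hcorn
    _ ≤ (∑ y ∈ univ \ ({i, j} : Finset (Fin n)), (f i y + f j y))
        + ∑ x : Fin n, (f x i + f x j) := by
        refine add_le_add le_rfl (Finset.sum_le_sum_of_subset_of_nonneg (Finset.subset_univ _) ?_)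
        intro x _ hx
        simp only [Finset.mem_insert, Finset.mem_singleton, not_or] at hx
        exact hcol x hx.1 hx.2
    _ = (∑ x : Fin n, ∑ y ∈ univ \ ({i, j} : Finset (Fin n)), f x y)
        + ∑ x : Fin n, (f x i + f x j) := by
        have e1 : (∑ x : Fin n, ∑ y ∈ univ \ ({i, j} : Finset (Fin n)), f x y)
            = (∑ y ∈ univ \ ({i, j} : Finset (Fin n)), f i y)
              + (∑ y ∈ univ \ ({i, j} : Finset (Fin n)), f j y) := by
          refine sum_eq_pair' hij (fun x => ∑ y ∈ univ \ ({i, j} : Finset (Fin n)), f x y) ?_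
          intro x hx1 hx2
          exact Finset.sum_eq_zero fun y hy => h0 x y hx1 hx2 (hmem y hy).1 (hmem y hy).2
        rw [e1, ← Finset.sum_add_distrib]
    _ = ∑ x : Fin n, ∑ y : Fin n, f x y := by
        rw [← Finset.sum_add_distrib]
        exact (Finset.sum_congr rfl fun x _ => (hsplit x).symm)

lemma double_sum_swap_index [AddCommMonoid M] (τ : Equiv.Perm (Fin n))
    (g : Fin n → Fin n → M) : (∑ x, ∑ y, g (τ x) (τ y)) = ∑ x, ∑ y, g x y :=
  calc (∑ x, ∑ y, g (τ x) (τ y)) = ∑ x, ∑ y, g (τ x) y :=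
        Finset.sum_congr rfl fun x _ => Equiv.sum_comp τ (g (τ x))
    _ = ∑ x, ∑ y, g x y := Equiv.sum_comp τ (fun x => ∑ y, g x y)

end Generic

section Swap
variable {n K : ℕ}

noncomputable def Lam (P : Equiv.Perm (Fin n) → ℝ) (c : Fin n → Fin K) : ℝ :=
  ∑ x : Fin n, ∑ y : Fin n, if c x < c y then pairwiseMarginal P y x else 0

noncomputable def invCount (r : Fin n → ℕ) (c : Fin n → Fin K) : ℕ :=
  ∑ x : Fin n, ∑ y : Fin n, if r x < r y ∧ c y < c x then 1 else 0

lemma lam_sub_swap (P : Equiv.Perm (Fin n) → ℝ) (h : ℝ) (b : Fin n → Fin K)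
    {i j : Fin n} (hij : i ≠ j) (hb : b j < b i)
    (h1 : 2 * h ≤ pairwiseMarginal P i j - pairwiseMarginal P j i)
    (h2 : ∀ k, k ≠ i → k ≠ j → pairwiseMarginal P j k ≤ pairwiseMarginal P i k)
    (h3 : ∀ k, k ≠ i → k ≠ j → pairwiseMarginal P k i ≤ pairwiseMarginal P k j) :
    2 * h ≤ Lam P b - Lam P (b ∘ (Equiv.swap i j)) := by
  set τ := Equiv.swap i j with hτ
  have hLam' : Lam P (b ∘ τ) = ∑ x : Fin n, ∑ y : Fin n,
      (if b x < b y then pairwiseMarginal P (τ y) (τ x) else 0) := by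
    rw [Lam, ← double_sum_swap_index τ
      (fun x y => if b x < b y then pairwiseMarginal P (τ y) (τ x) else 0)]
    refine Finset.sum_congr rfl fun x _ => Finset.sum_congr rfl fun y _ => ?_
    simp [hτ, Equiv.swap_apply_self]
  have hdiff : Lam P b - Lam P (b ∘ τ) = ∑ x : Fin n, ∑ y : Fin n,
      (if b x < b y then pairwiseMarginal P y x - pairwiseMarginal P (τ y) (τ x) else 0) := by
    rw [hLam', Lam, ← Finset.sum_sub_distrib]
    refine Finset.sum_congr rfl fun x _ => ?_
    rw [← Finset.sum_sub_distrib]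
    refine Finset.sum_congr rfl fun y _ => ?_
    split_ifs <;> ring
  rw [hdiff]
  refine double_sum_ge _ hij (2*h) ?_ ?_ ?_ ?_
  · intro x y hx1 hx2 hy1 hy2
    rw [hτ, Equiv.swap_apply_of_ne_of_ne hy1 hy2, Equiv.swap_apply_of_ne_of_ne hx1 hx2]
    simp
  · intro y hy1 hy2
    rw [hτ]
    simp only [Equiv.swap_apply_left, Equiv.swap_apply_right,
      Equiv.swap_apply_of_ne_of_ne hy1 hy2]
    by_cases hA : b i < b y
    · have hB : b j < b y := lt_trans hb hA
      rw [if_pos hA, if_pos hB]; linarith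
    · rw [if_neg hA]
      by_cases hB : b j < b y
      · rw [if_pos hB]; have := h3 y hy1 hy2; linarith
      · rw [if_neg hB]; linarith
  · intro x hx1 hx2
    rw [hτ]
    simp only [Equiv.swap_apply_left, Equiv.swap_apply_right,
      Equiv.swap_apply_of_ne_of_ne hx1 hx2]
    by_cases hB : b x < b j
    · have hA : b x < b i := lt_trans hB hb
      rw [if_pos hA, if_pos hB]; linarith
    · rw [if_neg hB]
      by_cases hA : b x < b i
      · rw [if_pos hA]; have := h2 x hx1 hx2; linarith
      · rw [if_neg hA]; linarith
  · rw [hτ]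
    simp only [Equiv.swap_apply_left, Equiv.swap_apply_right]
    rw [if_neg (lt_irrefl (b i)), if_neg (lt_irrefl (b j)), if_neg (asymm hb), if_pos hb]
    linarith

lemma shape_swap {lam : Fin K → ℕ} {b : Fin n → Fin K} (hb : HasShape b lam)
    (i j : Fin n) : HasShape (b ∘ (Equiv.swap i j)) lam := by
  intro k
  have himg : Finset.univ.filter (fun x => (b ∘ (Equiv.swap i j)) x = k)
      = Finset.image (Equiv.swap i j) (Finset.univ.filter (fun x => b x = k)) := by
    ext x
    simp only [Finset.mem_filter, Finset.mem_image, Finset.mem_univ, true_and,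
      Function.comp_apply]
    constructor
    · intro hx; exact ⟨Equiv.swap i j x, hx, Equiv.swap_apply_self i j x⟩
    · rintro ⟨y, hy, rfl⟩; rwa [Equiv.swap_apply_self]
  rw [himg, Finset.card_image_of_injective _ (Equiv.injective _), hb k]

lemma inv_swap_lt (r : Fin n → ℕ) (b : Fin n → Fin K) {i j : Fin n} (hij : i ≠ j)
    (hr : r i < r j) (hb : b j < b i) :
    invCount r (b ∘ (Equiv.swap i j)) < invCount r b := by
  set τ := Equiv.swap i j with hτ
  have hcastb : ∀ c : Fin n → Fin K, ((invCount r c : ℤ))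
      = ∑ x : Fin n, ∑ y : Fin n, (if r x < r y ∧ c y < c x then (1:ℤ) else 0) := by
    intro c
    rw [invCount]
    push_cast
    exact Finset.sum_congr rfl fun x _ => Finset.sum_congr rfl fun y _ => by
      split_ifs <;> norm_num
  have hinv' : ((invCount r (b ∘ τ) : ℤ)) = ∑ x : Fin n, ∑ y : Fin n,
      (if r (τ x) < r (τ y) ∧ b y < b x then (1:ℤ) else 0) := by
    rw [hcastb, ← double_sum_swap_index τ
      (fun x y => if r (τ x) < r (τ y) ∧ b y < b x then (1:ℤ) else 0)]
    refine Finset.sum_congr rfl fun x _ => Finset.sum_congr rfl fun y _ => ?_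
    simp [hτ, Equiv.swap_apply_self]
  have hdiff : (invCount r b : ℤ) - (invCount r (b ∘ τ) : ℤ) = ∑ x : Fin n, ∑ y : Fin n,
      ((if r x < r y ∧ b y < b x then (1:ℤ) else 0)
        - (if r (τ x) < r (τ y) ∧ b y < b x then (1:ℤ) else 0)) := by
    rw [hinv', hcastb, ← Finset.sum_sub_distrib]
    exact Finset.sum_congr rfl fun x _ => (Finset.sum_sub_distrib _ _).symm
  have key : (1:ℤ) ≤ (invCount r b : ℤ) - (invCount r (b ∘ τ) : ℤ) := by
    rw [hdiff]
    refine double_sum_ge _ hij 1 ?_ ?_ ?_ ?_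
    · intro x y hx1 hx2 hy1 hy2
      rw [hτ, Equiv.swap_apply_of_ne_of_ne hy1 hy2, Equiv.swap_apply_of_ne_of_ne hx1 hx2,
        sub_self]
    · intro y hy1 hy2
      rw [hτ]
      simp only [Equiv.swap_apply_left, Equiv.swap_apply_right,
        Equiv.swap_apply_of_ne_of_ne hy1 hy2]
      by_cases hA : r i < r y <;> by_cases hB : r j < r y <;>
        by_cases hC : b y < b i <;> by_cases hD : b y < b j <;>
        simp [hA, hB, hC, hD] <;>
        first
          | exact absurd (hr.trans hB) hA
          | exact absurd (hD.trans hb) hC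
    · intro x hx1 hx2
      rw [hτ]
      simp only [Equiv.swap_apply_left, Equiv.swap_apply_right,
        Equiv.swap_apply_of_ne_of_ne hx1 hx2]
      by_cases hA : r x < r i <;> by_cases hB : r x < r j <;>
        by_cases hC : b i < b x <;> by_cases hD : b j < b x <;>
        simp [hA, hB, hC, hD] <;>
        first
          | exact absurd (hA.trans hr) hB
          | exact absurd (hb.trans hC) hD
    · rw [hτ]
      simp only [Equiv.swap_apply_left, Equiv.swap_apply_right]
      have hr' : ¬ r j < r i := lt_asymm hr
      have hb' : ¬ b i < b j := lt_asymm hb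
      simp [lt_irrefl, hr, hb, hr', hb']
  omega


lemma mono_shape_unique {r : Fin n → ℕ} (hrinj : Function.Injective r)
    {b c : Fin n → Fin K} {lam : Fin K → ℕ}
    (hbs : HasShape b lam) (hcs : HasShape c lam)
    (hbm : ∀ x y, r x < r y → b x ≤ b y) (hcm : ∀ x y, r x < r y → c x ≤ c y) :
    b = c := by
  have hgen : ∀ d : Fin n → Fin K, HasShape d lam → ∀ k : Fin K,
      (Finset.univ.filter (fun i => d i ≤ k)).card
        = ∑ l ∈ Finset.univ.filter (fun l : Fin K => l ≤ k), lam l := by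
    intro d hd k
    have hdec : Finset.univ.filter (fun i => d i ≤ k)
        = (Finset.univ.filter (fun l : Fin K => l ≤ k)).biUnion
            (fun l => Finset.univ.filter (fun i => d i = l)) := by
      ext x
      simp only [Finset.mem_filter, Finset.mem_biUnion, Finset.mem_univ, true_and]
      exact ⟨fun hx => ⟨d x, hx, rfl⟩, fun ⟨l, hl, he⟩ => he ▸ hl⟩
    rw [hdec, Finset.card_biUnion]
    · exact Finset.sum_congr rfl fun l _ => hd l
    · intro l1 _ l2 _ hne
      refine Finset.disjoint_left.mpr fun x hx1 hx2 => ?_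
      simp only [Finset.mem_filter, Finset.mem_univ, true_and] at hx1 hx2
      exact hne (hx1 ▸ hx2 ▸ rfl)
  have hcard : ∀ k : Fin K, (Finset.univ.filter (fun i => b i ≤ k)).card
      = (Finset.univ.filter (fun i => c i ≤ k)).card := by
    intro k; rw [hgen b hbs k, hgen c hcs k]
  have hset : ∀ k : Fin K, Finset.univ.filter (fun i => b i ≤ k)
      = Finset.univ.filter (fun i => c i ≤ k) := by
    intro k
    have hsub : Finset.univ.filter (fun i => b i ≤ k)
        ⊆ Finset.univ.filter (fun i => c i ≤ k) := by
      intro x hx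
      simp only [Finset.mem_filter, Finset.mem_univ, true_and] at hx ⊢
      by_contra hxc
      have hTB : Finset.univ.filter (fun i => c i ≤ k)
          ⊆ Finset.univ.filter (fun i => b i ≤ k) := by
        intro y hy
        simp only [Finset.mem_filter, Finset.mem_univ, true_and] at hy ⊢
        have hxy : y ≠ x := fun he => hxc (he ▸ hy)
        have hrne : r y ≠ r x := fun he => hxy (hrinj he)
        rcases lt_or_gt_of_ne hrne with hlt | hgt
        · exact le_trans (hbm y x hlt) hx
        · exact absurd (le_trans (hcm x y hgt) hy) hxc
      have heq := Finset.eq_of_subset_of_card_le hTB (le_of_eq (hcard k))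
      have hxmem : x ∈ Finset.univ.filter (fun i => b i ≤ k) := by
        simp only [Finset.mem_filter, Finset.mem_univ, true_and]; exact hx
      rw [← heq] at hxmem
      simp only [Finset.mem_filter, Finset.mem_univ, true_and] at hxmem
      exact hxc hxmem
    exact Finset.eq_of_subset_of_card_le hsub (le_of_eq (hcard k).symm)
  funext x
  have h1 : x ∈ Finset.univ.filter (fun i => b i ≤ b x) := by simp
  rw [hset (b x)] at h1
  simp only [Finset.mem_filter, Finset.mem_univ, true_and] at h1
  have h2 : x ∈ Finset.univ.filter (fun i => c i ≤ c x) := by simp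
  rw [← hset (c x)] at h2
  simp only [Finset.mem_filter, Finset.mem_univ, true_and] at h2
  exact le_antisymm h2 h1


lemma ED_eq (P : Equiv.Perm (Fin n) → ℝ) (b bs : Fin n → Fin K) :
    (∑ σ : Equiv.Perm (Fin n), P σ * Dvar b bs σ) = Lam P b - Lam P bs := by
  have hσ : ∀ σ : Equiv.Perm (Fin n), P σ * Dvar b bs σ = ∑ x : Fin n, ∑ y : Fin n,
      (if x ≠ y ∧ σ y < σ x then
        ((if b x < b y then (1:ℝ) else 0) - (if bs x < bs y then (1:ℝ) else 0)) * P σ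
      else 0) := by
    intro σ
    rw [Dvar, Finset.sum_filter, Finset.mul_sum, Fintype.sum_prod_type]
    refine Finset.sum_congr rfl fun x _ => Finset.sum_congr rfl fun y _ => ?_
    split_ifs <;> ring
  have inner : ∀ x y : Fin n, (∑ σ : Equiv.Perm (Fin n),
      (if x ≠ y ∧ σ y < σ x then
        ((if b x < b y then (1:ℝ) else 0) - (if bs x < bs y then (1:ℝ) else 0)) * P σ
      else 0))
      = ((if b x < b y then pairwiseMarginal P y x else 0)
          - (if bs x < bs y then pairwiseMarginal P y x else 0)) := by
    intro x y
    by_cases hxy : x = y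
    · subst hxy
      simp [lt_irrefl]
    · have hterm : ∀ σ : Equiv.Perm (Fin n), (if x ≠ y ∧ σ y < σ x then
          ((if b x < b y then (1:ℝ) else 0) - (if bs x < bs y then (1:ℝ) else 0)) * P σ
        else 0)
          = ((if b x < b y then (1:ℝ) else 0) - (if bs x < bs y then (1:ℝ) else 0))
            * (if σ y < σ x then P σ else 0) := by
        intro σ
        by_cases hσ2 : σ y < σ x
        · rw [if_pos ⟨hxy, hσ2⟩, if_pos hσ2]
        · rw [if_neg (fun hc => hσ2 hc.2), if_neg hσ2, mul_zero]
      rw [Finset.sum_congr rfl fun σ _ => hterm σ, ← Finset.mul_sum]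
      rw [show (∑ σ : Equiv.Perm (Fin n), if σ y < σ x then P σ else 0)
        = pairwiseMarginal P y x from rfl]
      split_ifs <;> ring
  calc (∑ σ : Equiv.Perm (Fin n), P σ * Dvar b bs σ)
      = ∑ σ : Equiv.Perm (Fin n), ∑ x : Fin n, ∑ y : Fin n,
        (if x ≠ y ∧ σ y < σ x then
          ((if b x < b y then (1:ℝ) else 0) - (if bs x < bs y then (1:ℝ) else 0)) * P σ
        else 0) := Finset.sum_congr rfl fun σ _ => hσ σ
    _ = ∑ x : Fin n, ∑ σ : Equiv.Perm (Fin n), ∑ y : Fin n,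
        (if x ≠ y ∧ σ y < σ x then
          ((if b x < b y then (1:ℝ) else 0) - (if bs x < bs y then (1:ℝ) else 0)) * P σ
        else 0) := Finset.sum_comm
    _ = ∑ x : Fin n, ∑ y : Fin n, ∑ σ : Equiv.Perm (Fin n),
        (if x ≠ y ∧ σ y < σ x then
          ((if b x < b y then (1:ℝ) else 0) - (if bs x < bs y then (1:ℝ) else 0)) * P σ
        else 0) := Finset.sum_congr rfl fun x _ => Finset.sum_comm
    _ = ∑ x : Fin n, ∑ y : Fin n,
        ((if b x < b y then pairwiseMarginal P y x else 0)
          - (if bs x < bs y then pairwiseMarginal P y x else 0)) :=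
        Finset.sum_congr rfl fun x _ => Finset.sum_congr rfl fun y _ => inner x y
    _ = Lam P b - Lam P bs := by
        rw [Lam, Lam, ← Finset.sum_sub_distrib]
        exact Finset.sum_congr rfl fun x _ => Finset.sum_sub_distrib _ _

lemma invCount_pos_elim {r : Fin n → ℕ} {b : Fin n → Fin K} (hne : invCount r b ≠ 0) :
    ∃ x y, r x < r y ∧ b y < b x := by
  by_contra hc
  push_neg at hc
  refine hne ?_
  rw [invCount]
  refine Finset.sum_eq_zero fun x _ => Finset.sum_eq_zero fun y _ => ?_
  rw [if_neg]
  rintro ⟨h1, h2⟩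
  exact absurd h2 (not_lt.mpr (hc x y h1))

lemma invCount_zero_mono {r : Fin n → ℕ} {b : Fin n → Fin K} (h0 : invCount r b = 0) :
    ∀ x y, r x < r y → b x ≤ b y := by
  intro x y hrxy
  by_contra hlt
  rw [invCount] at h0
  have h1 := Finset.sum_eq_zero_iff.mp h0 x (Finset.mem_univ x)
  have h2 := Finset.sum_eq_zero_iff.mp h1 y (Finset.mem_univ y)
  rw [if_pos ⟨hrxy, not_le.mp hlt⟩] at h2
  exact one_ne_zero h2

lemma Dvar_abs_le (b bs : Fin n → Fin K) (σ : Equiv.Perm (Fin n)) :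
    |Dvar b bs σ| ≤ (n:ℝ)^2 := by
  rw [Dvar]
  have hcard : ((Finset.univ.filter
      (fun p : Fin n × Fin n => p.1 ≠ p.2 ∧ σ p.2 < σ p.1)).card : ℝ) ≤ (n:ℝ)^2 := by
    have h1 : (Finset.univ.filter
        (fun p : Fin n × Fin n => p.1 ≠ p.2 ∧ σ p.2 < σ p.1)).card ≤ n * n := by
      calc (Finset.univ.filter _).card ≤ (Finset.univ : Finset (Fin n × Fin n)).card :=
            Finset.card_filter_le _ _
        _ = n * n := by rw [Finset.card_univ]; simp [Fintype.card_prod]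
    calc ((Finset.univ.filter _).card : ℝ) ≤ ((n * n : ℕ) : ℝ) := by exact_mod_cast h1
      _ = (n:ℝ)^2 := by push_cast; ring
  calc |∑ p ∈ Finset.univ.filter
        (fun p : Fin n × Fin n => p.1 ≠ p.2 ∧ σ p.2 < σ p.1),
      ((if b p.1 < b p.2 then (1 : ℝ) else 0) - (if bs p.1 < bs p.2 then (1 : ℝ) else 0))|
      ≤ ∑ p ∈ Finset.univ.filter
        (fun p : Fin n × Fin n => p.1 ≠ p.2 ∧ σ p.2 < σ p.1),
        |((if b p.1 < b p.2 then (1 : ℝ) else 0) - (if bs p.1 < bs p.2 then (1 : ℝ) else 0))| :=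
        Finset.abs_sum_le_sum_abs _ _
    _ ≤ ∑ p ∈ Finset.univ.filter
        (fun p : Fin n × Fin n => p.1 ≠ p.2 ∧ σ p.2 < σ p.1), (1:ℝ) := by
        refine Finset.sum_le_sum fun p _ => ?_
        split_ifs <;> norm_num
    _ = ((Finset.univ.filter
        (fun p : Fin n × Fin n => p.1 ≠ p.2 ∧ σ p.2 < σ p.1)).card : ℝ) := by
        rw [Finset.sum_const, nsmul_eq_mul, mul_one]
    _ ≤ (n:ℝ)^2 := hcard

lemma nat_sq_le_pow (m : ℕ) : (m+2)^2 ≤ 2^((m+2)*((m+2)-1)/2 + 1) := by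
  have h1 : m + 2 ≤ 2^(m+1) := by
    have := Nat.lt_two_pow_self (n := m+1)
    omega
  have h2 : (m+2)^2 ≤ (2^(m+1))^2 := Nat.pow_le_pow_left h1 2
  have h3 : (2^(m+1))^2 = 2^(2*(m+1)) := by rw [← pow_mul]; ring_nf
  have h4 : 2*(m+1) ≤ (m+2)*((m+2)-1)/2 + 1 := by
    have hkey : 2*m + 1 ≤ (m+2)*(m+1)/2 := by
      rw [Nat.le_div_iff_mul_le (by norm_num)]
      have hm : m ≤ m * m := by
        rcases Nat.eq_zero_or_pos m with h0 | h0
        · omega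
        · calc m = m * 1 := (mul_one m).symm
            _ ≤ m * m := Nat.mul_le_mul_left m h0
      nlinarith
    have : (m+2)-1 = m+1 := by omega
    rw [this]
    omega
  calc (m+2)^2 ≤ 2^(2*(m+1)) := h3 ▸ h2
    _ ≤ 2^((m+2)*((m+2)-1)/2 + 1) := Nat.pow_le_pow_right (by norm_num) h4


end Swap

/-- Under strong/strict stochastic transitivity and the low-noise condition
`min_{i<j} |p_{i,j} - 1/2| ≥ h > 0`, with `C* = C*^{(K,λ)}` the optimal bucket
order of shape `λ` (the `λ`-segmentation of the Kemeny ranking), one has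
`Var(D(C)) ≤ 2^{n(n-1)/2} (n²/h) E[D(C)]` for every bucket order `C` of
shape `λ`. -/
theorem variance_control {n K : ℕ} (P : Equiv.Perm (Fin n) → ℝ)
    (hP0 : ∀ σ, 0 ≤ P σ) (hP1 : ∑ σ : Equiv.Perm (Fin n), P σ = 1)
    (hSST : ∀ i j k : Fin n, i ≠ j → k ≠ i → k ≠ j →
      1 / 2 ≤ pairwiseMarginal P i j →
      pairwiseMarginal P j k ≤ pairwiseMarginal P i k)
    (hstrict : ∀ i j : Fin n, i ≠ j → pairwiseMarginal P i j ≠ 1 / 2)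
    (h : ℝ) (hh : 0 < h)
    (hnoise : ∀ i j : Fin n, i < j → h ≤ |pairwiseMarginal P i j - 1 / 2|)
    (lam : Fin K → ℕ) (hlam : ∀ k, 1 ≤ lam k) (hsum : ∑ k, lam k = n)
    (bstar : Fin n → Fin K) (hbstar_shape : HasShape bstar lam)
    (hbstar : ∀ (i : Fin n) (k : Fin K), bstar i = k ↔
      (∑ l ∈ Finset.univ.filter (fun l => l < k), lam l) < copelandRank P i ∧
        copelandRank P i ≤ ∑ l ∈ Finset.univ.filter (fun l => l ≤ k), lam l)
    (b : Fin n → Fin K) (hb : HasShape b lam) :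
    (∑ σ : Equiv.Perm (Fin n), P σ * (Dvar b bstar σ) ^ 2) -
        (∑ σ : Equiv.Perm (Fin n), P σ * Dvar b bstar σ) ^ 2 ≤
      2 ^ (n * (n - 1) / 2) * ((n : ℝ) ^ 2 / h) *
        ∑ σ : Equiv.Perm (Fin n), P σ * Dvar b bstar σ := by
  classical
  set r : Fin n → ℕ := copelandRank P with hrdef
  have hrinj : Function.Injective r := rank_injective P hP1 hSST hstrict
  -- bstar is monotone w.r.t. the Copeland rank
  have hbsm : ∀ x y : Fin n, r x < r y → bstar x ≤ bstar y := by
    intro x y hrxy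
    by_contra hle
    have hlt : bstar y < bstar x := not_le.mp hle
    have hx := (hbstar x (bstar x)).mp rfl
    have hy := (hbstar y (bstar y)).mp rfl
    have hsub : Finset.univ.filter (fun l : Fin K => l ≤ bstar y)
        ⊆ Finset.univ.filter (fun l : Fin K => l < bstar x) := by
      intro l hl
      simp only [Finset.mem_filter, Finset.mem_univ, true_and] at hl ⊢
      exact lt_of_le_of_lt hl hlt
    have hsum' : (∑ l ∈ Finset.univ.filter (fun l : Fin K => l ≤ bstar y), lam l)
        ≤ ∑ l ∈ Finset.univ.filter (fun l : Fin K => l < bstar x), lam l :=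
      Finset.sum_le_sum_of_subset hsub
    have e1 := hx.1
    have e2 := hy.2
    omega
  by_cases hz : invCount r b = 0
  · -- b = bstar, everything vanishes
    have hbm : ∀ x y, r x < r y → b x ≤ b y := invCount_zero_mono hz
    have hbb : b = bstar := mono_shape_unique hrinj hb hbstar_shape hbm hbsm
    have hD : ∀ σ : Equiv.Perm (Fin n), Dvar b bstar σ = 0 := by
      intro σ
      rw [hbb, Dvar]
      exact Finset.sum_eq_zero fun p _ => sub_self _
    simp only [hD]
    simp
  · -- main case
    obtain ⟨i0, j0, hr0, hb0⟩ := invCount_pos_elim hz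
    have hij0 : i0 ≠ j0 := fun he => absurd (he ▸ hr0) (lt_irrefl _)
    have hn2 : 2 ≤ n := by
      have hv : (i0 : ℕ) ≠ (j0 : ℕ) := by simpa [Fin.ext_iff] using hij0
      have := i0.isLt
      have := j0.isLt
      omega
    have hmain : ∀ m : ℕ, ∀ c : Fin n → Fin K, HasShape c lam → invCount r c ≤ m →
        (Lam P bstar ≤ Lam P c ∧ (invCount r c ≠ 0 → Lam P bstar + 2*h ≤ Lam P c)) := by
      intro m
      induction m with
      | zero =>
        intro c hcs hc0
        have hc0' : invCount r c = 0 := Nat.le_zero.mp hc0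
        have hcb : c = bstar :=
          mono_shape_unique hrinj hcs hbstar_shape (invCount_zero_mono hc0') hbsm
        rw [hcb] at hc0' ⊢
        exact ⟨le_rfl, fun hne => absurd hc0' hne⟩
      | succ m ih =>
        intro c hcs hcle
        by_cases hc0 : invCount r c = 0
        · have hcb : c = bstar :=
            mono_shape_unique hrinj hcs hbstar_shape (invCount_zero_mono hc0) hbsm
          rw [hcb] at hc0 ⊢
          exact ⟨le_rfl, fun hne => absurd hc0 hne⟩
        · obtain ⟨i, j, hrij, hbij⟩ := invCount_pos_elim hc0
          have hij : i ≠ j := fun he => absurd (he ▸ hrij) (lt_irrefl _)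
          have hshape' : HasShape (c ∘ (Equiv.swap i j)) lam := shape_swap hcs i j
          have hinvlt : invCount r (c ∘ (Equiv.swap i j)) < invCount r c :=
            inv_swap_lt r c hij hrij hbij
          have hIH := ih (c ∘ (Equiv.swap i j)) hshape' (by omega)
          have hpij : 1/2 + h ≤ pairwiseMarginal P i j :=
            pm_ge_of_rank_lt P hP1 hSST hstrict hnoise hij hrij
          have hadd := pm_add P hP1 hij
          have h1 : 2*h ≤ pairwiseMarginal P i j - pairwiseMarginal P j i := by linarith
          have h2 : ∀ k, k ≠ i → k ≠ j →
              pairwiseMarginal P j k ≤ pairwiseMarginal P i k := fun k hki hkj =>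
            hSST i j k hij hki hkj (by linarith)
          have h3 : ∀ k, k ≠ i → k ≠ j →
              pairwiseMarginal P k i ≤ pairwiseMarginal P k j := by
            intro k hki hkj
            have ha1 := pm_add P hP1 (Ne.symm hki)
            have ha2 := pm_add P hP1 (Ne.symm hkj)
            have := h2 k hki hkj
            linarith
          have hswap := lam_sub_swap P h c hij hbij h1 h2 h3
          refine ⟨by linarith [hIH.1, hh], fun _ => by linarith [hIH.1]⟩
    have hE2h : Lam P bstar + 2*h ≤ Lam P b := (hmain (invCount r b) b hb le_rfl).2 hz
    have hEeq : (∑ σ : Equiv.Perm (Fin n), P σ * Dvar b bstar σ)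
        = Lam P b - Lam P bstar := ED_eq P b bstar
    have hE : 2*h ≤ ∑ σ : Equiv.Perm (Fin n), P σ * Dvar b bstar σ := by
      rw [hEeq]; linarith
    have hDle : ∀ σ : Equiv.Perm (Fin n), (Dvar b bstar σ)^2 ≤ ((n:ℝ)^2)^2 := by
      intro σ
      have h1 := Dvar_abs_le b bstar σ
      calc (Dvar b bstar σ)^2 = |Dvar b bstar σ|^2 := (sq_abs _).symm
        _ ≤ ((n:ℝ)^2)^2 := pow_le_pow_left₀ (abs_nonneg _) h1 2
    have hsum2 : (∑ σ : Equiv.Perm (Fin n), P σ * (Dvar b bstar σ)^2) ≤ (n:ℝ)^4 := by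
      calc (∑ σ : Equiv.Perm (Fin n), P σ * (Dvar b bstar σ)^2)
          ≤ ∑ σ : Equiv.Perm (Fin n), P σ * ((n:ℝ)^2)^2 :=
            Finset.sum_le_sum fun σ _ => mul_le_mul_of_nonneg_left (hDle σ) (hP0 σ)
        _ = ((n:ℝ)^2)^2 := by rw [← Finset.sum_mul, hP1, one_mul]
        _ = (n:ℝ)^4 := by ring
    have hpow : (n:ℝ)^2 ≤ 2^(n*(n-1)/2 + 1) := by
      obtain ⟨m, rfl⟩ : ∃ m, n = m + 2 := ⟨n - 2, by omega⟩
      exact_mod_cast Nat.cast_le.mpr (nat_sq_le_pow m)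
    set E := ∑ σ : Equiv.Perm (Fin n), P σ * Dvar b bstar σ with hEdef
    have c1 : (0:ℝ) ≤ 2^(n*(n-1)/2) * ((n:ℝ)^2/h) := by positivity
    have c2 : 2^(n*(n-1)/2) * ((n:ℝ)^2/h) * (2*h) ≤ 2^(n*(n-1)/2) * ((n:ℝ)^2/h) * E :=
      mul_le_mul_of_nonneg_left hE c1
    have c3 : 2^(n*(n-1)/2) * ((n:ℝ)^2/h) * (2*h) = 2^(n*(n-1)/2 + 1) * (n:ℝ)^2 := by
      field_simp
      ring
    have c4 : (n:ℝ)^2 * (n:ℝ)^2 ≤ (2:ℝ)^(n*(n-1)/2 + 1) * (n:ℝ)^2 :=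
      mul_le_mul_of_nonneg_right hpow (sq_nonneg _)
    have hsq : (0:ℝ) ≤ E^2 := sq_nonneg E
    have : (n:ℝ)^4 = (n:ℝ)^2 * (n:ℝ)^2 := by ring
    linarith
end
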